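/- Fix a real number λ, a nonnegative integer r, and sequences of real numbers (a_n)_{n≥0} and (b_n)_{n≥0}. If b_n = Σ_{k=0}^{n} {n+r, k+r}_{r,λ} a_k holds for every n ≥ 0, then a_n = Σ_{k=0}^{n} (−1)^{n−k} [n+r, k+r]_{r,λ} b_k holds for every n ≥ 0. -/

import Mathlib

open Finset

/-- The degenerate falling factorial `(x)_{n,λ} = x(x-λ)(x-2λ)⋯(x-(n-1)λ)`. -/
noncomputable def degFall (lam x : ℝ) (n : ℕ) : ℝ := ∏ i ∈ Finset.range n, (x - i * lam)

/-- The degenerate rising factorial `⟨x⟩_{n,λ} = x(x+λ)(x+2λ)⋯(x+(n-1)λ)`. -/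
noncomputable def degRise (lam x : ℝ) (n : ℕ) : ℝ := ∏ i ∈ Finset.range n, (x + i * lam)

lemma degRise_neg (lam x : ℝ) (k : ℕ) :
    degRise lam (-x) k = (-1) ^ k * degFall lam x k := by
  unfold degRise degFall
  calc ∏ i ∈ range k, (-x + i * lam) = ∏ i ∈ range k, ((-1) * (x - i * lam)) :=
        prod_congr rfl fun i _ => by ring
    _ = (∏ _i ∈ range k, (-1 : ℝ)) * ∏ i ∈ range k, (x - i * lam) := prod_mul_distrib
    _ = (-1) ^ k * ∏ i ∈ range k, (x - i * lam) := by rw [prod_const, card_range]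

lemma degFall_nat_zero {j m : ℕ} (h : j < m) : degFall 1 (j : ℝ) m = 0 := by
  unfold degFall
  exact prod_eq_zero (mem_range.2 h) (by simp)

lemma degFall_nat_ne_zero (j : ℕ) : degFall 1 (j : ℝ) j ≠ 0 := by
  unfold degFall
  refine prod_ne_zero_iff.2 fun i hi => ?_
  have := mem_range.1 hi
  have : (i : ℝ) < j := by exact_mod_cast this
  intro hc; nlinarith

lemma neg_one_pow_sub {k n : ℕ} (h : k ≤ n) :
    (-1 : ℝ) ^ (n - k) = (-1) ^ n * (-1) ^ k := by
  have : (-1 : ℝ) ^ (n - k) * (-1) ^ k = (-1) ^ n := by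
    rw [← pow_add, Nat.sub_add_cancel h]
  have hk : ((-1 : ℝ) ^ k) * ((-1 : ℝ) ^ k) = 1 := by
    rw [← pow_add]; simp [pow_add, ← two_mul, pow_mul]
  calc (-1 : ℝ) ^ (n - k) = (-1 : ℝ) ^ (n - k) * (((-1:ℝ)^k) * ((-1:ℝ)^k)) := by rw [hk, mul_one]
    _ = ((-1 : ℝ) ^ (n - k) * (-1)^k) * (-1)^k := by ring
    _ = (-1)^n * (-1)^k := by rw [this]


/-- Inverse relation (backward direction): if
`b_n = ∑_{k=0}^{n} {n+r,k+r}_{r,λ} a_k` for all `n`, then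
`a_n = ∑_{k=0}^{n} (−1)^{n−k} [n+r,k+r]_{r,λ} b_k` for all `n`. -/
theorem inverse_relation_backward (lam : ℝ) (r : ℕ) (S1 S2 : ℕ → ℕ → ℝ)
    (hS1 : ∀ (n : ℕ) (x : ℝ),
      degRise 1 (x + r) n = ∑ k ∈ range (n + 1), S1 n k * degRise lam x k)
    (hS2 : ∀ (n : ℕ) (x : ℝ),
      degFall lam (x + r) n = ∑ k ∈ range (n + 1), S2 n k * degFall 1 x k)
    (a b : ℕ → ℝ)
    (hba : ∀ n : ℕ, b n = ∑ k ∈ range (n + 1), S2 n k * a k) :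
    ∀ n : ℕ, a n = ∑ k ∈ range (n + 1), (-1 : ℝ) ^ (n - k) * S1 n k * b k := by
  -- Step 1: degFall 1 x n = ∑ (-1)^(n-k) S1 n k * degFall lam (x+r) k
  have L1 : ∀ (n : ℕ) (x : ℝ),
      degFall 1 x n = ∑ k ∈ range (n + 1), (-1:ℝ)^(n-k) * S1 n k * degFall lam (x + r) k := by
    intro n x
    have h := hS1 n (-(x + r))
    rw [show -(x + (r:ℝ)) + r = -x by ring, degRise_neg 1 x n] at h
    have h2 : ∀ k ∈ range (n+1), S1 n k * degRise lam (-(x + r)) k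
        = S1 n k * ((-1:ℝ)^k * degFall lam (x + r) k) := by
      intro k _; rw [degRise_neg]
    rw [sum_congr rfl h2] at h
    have h3 := congrArg (fun y => (-1:ℝ)^n * y) h
    simp only [mul_sum] at h3
    have hn : ((-1:ℝ)^n) * ((-1:ℝ)^n) = 1 := by
      rw [← pow_add]; simp [← two_mul, pow_mul]
    calc degFall 1 x n = ((-1:ℝ)^n * (-1:ℝ)^n) * degFall 1 x n := by rw [hn, one_mul]
      _ = (-1:ℝ)^n * ((-1:ℝ)^n * degFall 1 x n) := by ring
      _ = ∑ k ∈ range (n+1), (-1:ℝ)^n * (S1 n k * ((-1:ℝ)^k * degFall lam (x + r) k)) := h3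
      _ = ∑ k ∈ range (n+1), (-1:ℝ)^(n-k) * S1 n k * degFall lam (x + r) k := by
          refine sum_congr rfl fun k hk => ?_
          rw [neg_one_pow_sub (Nat.lt_succ_iff.1 (mem_range.1 hk))]; ring
  -- the coefficients
  set c : ℕ → ℕ → ℝ := fun n m => ∑ k ∈ Icc m n, (-1:ℝ)^(n-k) * S1 n k * S2 k m with hc
  -- Step 2: degFall 1 x n = ∑ c n m degFall 1 x m
  have L2 : ∀ (n : ℕ) (x : ℝ),
      degFall 1 x n = ∑ m ∈ range (n + 1), c n m * degFall 1 x m := by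
    intro n x
    rw [L1 n x]
    have : ∀ k ∈ range (n+1), (-1:ℝ)^(n-k) * S1 n k * degFall lam (x + r) k
        = ∑ m ∈ range (k+1), ((-1:ℝ)^(n-k) * S1 n k * S2 k m) * degFall 1 x m := by
      intro k _
      rw [hS2 k x, mul_sum]
      exact sum_congr rfl fun m _ => by ring
    rw [sum_congr rfl this]
    -- swap the sums
    have swap := sum_Ico_Ico_comm 0 (n+1)
      (fun m k => ((-1:ℝ)^(n-k) * S1 n k * S2 k m) * degFall 1 x m)
    simp only [Nat.Ico_zero_eq_range] at swap
    rw [← swap]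
    refine sum_congr rfl fun m hm => ?_
    rw [hc]
    have : Finset.Ico m (n+1) = Finset.Icc m n := by
      ext k; simp [Nat.lt_succ_iff]
    rw [this, sum_mul]
  -- Step 3: orthogonality
  have orth : ∀ n : ℕ, ∀ j ≤ n, c n j = if j = n then 1 else 0 := by
    intro n
    intro j
    induction j using Nat.strong_induction_on with
    | _ j ih =>
      intro hj
      have key := L2 n (j : ℝ)
      have split : ∑ m ∈ range (n + 1), c n m * degFall 1 (j:ℝ) m = c n j * degFall 1 (j:ℝ) j := by
        rw [← sum_subset (Finset.singleton_subset_iff.2 (mem_range.2 (Nat.lt_succ_of_le hj)))]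
        · rw [sum_singleton]
        · intro m hm hm'
          rcases lt_trichotomy m j with h | h | h
          · have := ih m h (le_trans h.le hj)
            rw [this, if_neg (by omega), zero_mul]
          · exact absurd (by simp [h]) hm'
          · rw [degFall_nat_zero h, mul_zero]
      rw [split] at key
      rcases eq_or_lt_of_le hj with heq | hlt
      · rw [if_pos heq]
        subst heq
        have hkey : c j j * degFall 1 (j:ℝ) j = 1 * degFall 1 (j:ℝ) j := by
          rw [one_mul, ← key]
        exact mul_right_cancel₀ (degFall_nat_ne_zero j) hkey
      · rw [if_neg (by omega)]
        rw [degFall_nat_zero hlt] at key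
        have := degFall_nat_ne_zero j
        rcases mul_eq_zero.1 key.symm with h | h
        · exact h
        · exact absurd h this
  -- Step 4: conclusion
  intro n
  have expand : ∑ k ∈ range (n + 1), (-1 : ℝ) ^ (n - k) * S1 n k * b k
      = ∑ m ∈ range (n + 1), c n m * a m := by
    have : ∀ k ∈ range (n+1), (-1 : ℝ) ^ (n - k) * S1 n k * b k
        = ∑ m ∈ range (k+1), ((-1:ℝ)^(n-k) * S1 n k * S2 k m) * a m := by
      intro k _
      rw [hba k, mul_sum]
      exact sum_congr rfl fun m _ => by ring
    rw [sum_congr rfl this]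
    have swap := sum_Ico_Ico_comm 0 (n+1)
      (fun m k => ((-1:ℝ)^(n-k) * S1 n k * S2 k m) * a m)
    simp only [Nat.Ico_zero_eq_range] at swap
    rw [← swap]
    refine sum_congr rfl fun m hm => ?_
    rw [hc]
    have : Finset.Ico m (n+1) = Finset.Icc m n := by
      ext k; simp [Nat.lt_succ_iff]
    rw [this, sum_mul]
  rw [expand]
  rw [sum_congr rfl (fun m hm => by
    rw [orth n m (Nat.lt_succ_iff.1 (mem_range.1 hm))])]
  simp
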